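/- If (W,w) and (V,v) are Bessel fusion sequences for W and V respectively and T_{V,v} Q T*_{W,w} = π_{V,W⊥} for some bounded Q, then (V,v) is automatically a fusion frame for V and (W,w) a fusion frame for W; equivalently, Im(T_{V,v}) = V and Im(T_{W,w}) = W. -/

import Mathlib

open ContinuousLinearMap
set_option maxHeartbeats 1000000

/-- If `(W_i,w_i)` and `(V_i,v_i)` are Bessel fusion sequences for `W` and `V` and
`T_V Q T_W* = π_{V,Wᗮ}` for some bounded `Q`, then they are automatically fusion
frames, i.e. `Im(T_V) = V` and `Im(T_W) = W`. -/
theorem bessel_oblique_dual_implies_fusion_frames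
    {H : Type*} [NormedAddCommGroup H] [InnerProductSpace ℂ H] [CompleteSpace H]
    {I : Type*} (V W : Submodule ℂ H) [CompleteSpace V] [CompleteSpace W]
    (hcompl : IsCompl V Wᗮ)
    (Wi Vi : I → Submodule ℂ H) [∀ i, CompleteSpace (Wi i)] [∀ i, CompleteSpace (Vi i)]
    (hWiW : ∀ i, Wi i ≤ W) (hViV : ∀ i, Vi i ≤ V)
    (w v : I → ℝ) (hw : ∀ i, 0 < w i) (hv : ∀ i, 0 < v i)
    (TW : lp (fun i => Wi i) 2 →L[ℂ] H)
    (hTW : ∀ c, HasSum (fun i => w i • (c i : H)) (TW c))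
    (TV : lp (fun i => Vi i) 2 →L[ℂ] H)
    (hTV : ∀ c, HasSum (fun i => v i • (c i : H)) (TV c))
    (Q : lp (fun i => Wi i) 2 →L[ℂ] lp (fun i => Vi i) 2)
    (P : H →L[ℂ] H) (hPV : ∀ f ∈ V, P f = f) (hPW : ∀ f ∈ Wᗮ, P f = 0)
    (hdual : ∀ f : H, TV (Q (TW.adjoint f)) = P f) :
    LinearMap.range (TV : lp (fun i => Vi i) 2 →ₗ[ℂ] H) = V ∧ LinearMap.range (TW : lp (fun i => Wi i) 2 →ₗ[ℂ] H) = W := by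
  -- decomposition of H
  have hdecomp : ∀ g : H, ∃ a ∈ V, ∃ b ∈ Wᗮ, g = a + b := by
    intro g
    have hg : g ∈ V ⊔ Wᗮ := by rw [hcompl.sup_eq_top]; trivial
    rcases Submodule.mem_sup.mp hg with ⟨a, ha, b, hb, hab⟩
    exact ⟨a, ha, b, hb, hab.symm⟩
  have hVclosed : IsClosed (V : Set H) :=
    (completeSpace_coe_iff_isComplete.mp ‹_›).isClosed
  have hWclosed : IsClosed (W : Set H) :=
    (completeSpace_coe_iff_isComplete.mp ‹_›).isClosed
  -- ranges contained
  have hrV : LinearMap.range (TV : lp (fun i => Vi i) 2 →ₗ[ℂ] H) ≤ V := by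
    rintro _ ⟨c, rfl⟩
    refine hVclosed.mem_of_tendsto (hTV c) (Filter.Eventually.of_forall fun s => ?_)
    exact Submodule.sum_mem _ fun i _ => Submodule.smul_mem _ _ (hViV i (c i).2)
  have hrW : LinearMap.range (TW : lp (fun i => Wi i) 2 →ₗ[ℂ] H) ≤ W := by
    rintro _ ⟨c, rfl⟩
    refine hWclosed.mem_of_tendsto (hTW c) (Filter.Eventually.of_forall fun s => ?_)
    exact Submodule.sum_mem _ fun i _ => Submodule.smul_mem _ _ (hWiW i (c i).2)
  -- operator equality and adjoint
  have hop : TV ∘L (Q ∘L TW.adjoint) = P := by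
    ext f; simpa using hdual f
  have hadj : TW ∘L (Q.adjoint ∘L TV.adjoint) = P.adjoint := by
    rw [← hop, adjoint_comp, adjoint_comp, adjoint_adjoint, comp_assoc]
  -- P.adjoint fixes W
  have hPadj : ∀ f ∈ W, P.adjoint f = f := by
    intro f hf
    apply ext_inner_right ℂ
    intro g
    rw [adjoint_inner_left]
    rcases hdecomp g with ⟨a, ha, b, hb, rfl⟩
    have hPg : P (a + b) = a := by rw [map_add, hPV a ha, hPW b hb, add_zero]
    rw [hPg, inner_add_right, Submodule.inner_right_of_mem_orthogonal hf hb, add_zero]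
  constructor
  · refine le_antisymm hrV fun f hf => ?_
    exact ⟨Q (TW.adjoint f), (hdual f).trans (hPV f hf)⟩
  · refine le_antisymm hrW fun f hf => ?_
    refine ⟨Q.adjoint (TV.adjoint f), ?_⟩
    have := congrArg (fun A : H →L[ℂ] H => A f) hadj
    simpa [hPadj f hf] using this
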